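/- Let f₁ : ℝ → ℝ be C¹, even, and uniformly convex (s ↦ f₁(s) − η s² convex for some η > 0), and let R > 0. Define H¹(p) = sup over |α| ≤ R in H of (⟨α,p⟩ − f₁(|α|)). Then H¹(p) = (f₁')^{−1}(|p|)·|p| − f₁((f₁')^{−1}(|p|)) if |p| < f₁'(R), and H¹(p) = R|p| − f₁(R) if |p| ≥ f₁'(R). -/

import Mathlib

open MeasureTheory Filter
open scoped RealInnerProductSpace

/-- for `f₁` C¹, even and uniformly convex, `R > 0`, and
`H¹(p) = sup_{‖α‖≤R} (⟨α,p⟩ − f₁(‖α‖))`, with `g = (f₁')⁻¹` on `[0, f₁'(R))`: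
if `‖p‖ < f₁'(R)` then `H¹(p) = g(‖p‖)‖p‖ − f₁(g(‖p‖))`, and if `‖p‖ ≥ f₁'(R)` then
`H¹(p) = R‖p‖ − f₁(R)`. -/
theorem stmt13 {H : Type*} [NormedAddCommGroup H] [InnerProductSpace ℝ H]
    (R η : ℝ) (hR : 0 < R) (hη : 0 < η)
    (f₁ : ℝ → ℝ) (hdiff : Differentiable ℝ f₁) (hderivcont : Continuous (deriv f₁))
    (heven : ∀ s, f₁ (-s) = f₁ s)
    (hconv : ConvexOn ℝ Set.univ (fun s => f₁ s - η * s ^ 2))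
    (g : ℝ → ℝ)
    (hg : ∀ r ∈ Set.Ico (0:ℝ) (deriv f₁ R), g r ∈ Set.Ico (0:ℝ) R ∧ deriv f₁ (g r) = r)
    (p : H) :
    (‖p‖ < deriv f₁ R →
      sSup {y : ℝ | ∃ α : H, ‖α‖ ≤ R ∧ y = ⟪α, p⟫ - f₁ ‖α‖}
        = g ‖p‖ * ‖p‖ - f₁ (g ‖p‖)) ∧
    (deriv f₁ R ≤ ‖p‖ →
      sSup {y : ℝ | ∃ α : H, ‖α‖ ≤ R ∧ y = ⟪α, p⟫ - f₁ ‖α‖}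
        = R * ‖p‖ - f₁ R) := by
  set c := ‖p‖ with hcdef
  have hc0 : 0 ≤ c := norm_nonneg p
  -- auxiliary: derivative of the convexified function
  have hdη : Differentiable ℝ (fun s : ℝ => f₁ s - η * s ^ 2) := by
    exact hdiff.sub (by fun_prop)
  have hderivh : ∀ t : ℝ, deriv (fun s : ℝ => f₁ s - η * s ^ 2) t
      = deriv f₁ t - 2 * η * t := by
    intro t
    rw [deriv_fun_sub (hdiff t) (by fun_prop)]
    have : deriv (fun s : ℝ => η * s ^ 2) t = η * (2 * t) := by
      simp [deriv_const_mul, mul_comm]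
    rw [this]; ring
  have hmono0 : MonotoneOn (deriv (fun s : ℝ => f₁ s - η * s ^ 2)) Set.univ :=
    hconv.monotoneOn_deriv (fun x _ => hdη x)
  have hsm : StrictMono (deriv f₁) := by
    intro s t hst
    have h := hmono0 (Set.mem_univ s) (Set.mem_univ t) hst.le
    rw [hderivh, hderivh] at h
    nlinarith
  have hderiv0 : deriv f₁ 0 = 0 := by
    have h1 : (fun s : ℝ => f₁ (-s)) = f₁ := funext heven
    have h2 : deriv (fun s : ℝ => f₁ (-s)) 0 = -deriv f₁ 0 := by
      rw [deriv_comp_neg]; simp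
    rw [h1] at h2
    linarith
  have key : ∀ t0 : ℝ, 0 ≤ t0 → t0 ≤ R →
      (∀ t ∈ Set.Ioo (0:ℝ) t0, deriv f₁ t ≤ c) →
      (∀ t ∈ Set.Ioo t0 R, c ≤ deriv f₁ t) →
      (p ≠ 0 ∨ t0 = 0) →
      sSup {y : ℝ | ∃ α : H, ‖α‖ ≤ R ∧ y = ⟪α, p⟫ - f₁ ‖α‖} = t0 * c - f₁ t0 := by
    intro t0 ht0 htR hle hge hex
    have hφdiff : Differentiable ℝ (fun t : ℝ => t * c - f₁ t) := by
      exact (differentiable_id.mul_const c).sub hdiff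
    have hφderiv : ∀ t : ℝ, deriv (fun t : ℝ => t * c - f₁ t) t = c - deriv f₁ t := by
      intro t
      have h : HasDerivAt (fun t : ℝ => t * c - f₁ t) (1 * c - deriv f₁ t) t :=
        ((hasDerivAt_id t).mul_const c).sub (hdiff t).hasDerivAt
      rw [h.deriv]; ring
    have hmonoφ : MonotoneOn (fun t : ℝ => t * c - f₁ t) (Set.Icc 0 t0) := by
      apply monotoneOn_of_deriv_nonneg (convex_Icc _ _) hφdiff.continuous.continuousOn
        hφdiff.differentiableOn
      intro x hx
      rw [interior_Icc] at hx
      rw [hφderiv]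
      linarith [hle x hx]
    have hantiφ : AntitoneOn (fun t : ℝ => t * c - f₁ t) (Set.Icc t0 R) := by
      apply antitoneOn_of_deriv_nonpos (convex_Icc _ _) hφdiff.continuous.continuousOn
        hφdiff.differentiableOn
      intro x hx
      rw [interior_Icc] at hx
      rw [hφderiv]
      linarith [hge x hx]
    have hub : ∀ t ∈ Set.Icc (0:ℝ) R, t * c - f₁ t ≤ t0 * c - f₁ t0 := by
      intro t ht
      rcases le_total t t0 with h | h
      · exact hmonoφ ⟨ht.1, h⟩ ⟨ht0, le_rfl⟩ h
      · exact hantiφ ⟨le_rfl, htR⟩ ⟨h, ht.2⟩ h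
    have hgreat : IsGreatest {y : ℝ | ∃ α : H, ‖α‖ ≤ R ∧ y = ⟪α, p⟫ - f₁ ‖α‖}
        (t0 * c - f₁ t0) := by
      constructor
      · rcases hex with hp | ht0z
        · refine ⟨(t0 / c) • p, ?_, ?_⟩
          · have hcpos : 0 < c := norm_pos_iff.mpr hp
            rw [norm_smul]
            simp only [Real.norm_eq_abs, abs_div, abs_of_nonneg ht0, abs_of_pos hcpos]
            rw [← hcdef]
            field_simp
            linarith
          · have hcpos : 0 < c := norm_pos_iff.mpr hp
            have hn : ‖(t0 / c) • p‖ = t0 := by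
              rw [norm_smul]
              simp only [Real.norm_eq_abs, abs_div, abs_of_nonneg ht0, abs_of_pos hcpos]
              rw [← hcdef]
              field_simp
            rw [hn, real_inner_smul_left, real_inner_self_eq_norm_sq, ← hcdef]
            field_simp
        · subst ht0z
          exact ⟨0, by simpa using hR.le, by simp⟩
      · rintro y ⟨α, hα, rfl⟩
        have h1 : ⟪α, p⟫ ≤ ‖α‖ * c := by
          rw [hcdef]; exact real_inner_le_norm α p
        have h2 := hub ‖α‖ ⟨norm_nonneg α, hα⟩
        linarith
    exact hgreat.csSup_eq
  constructor
  · intro hlt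
    obtain ⟨⟨hg0, hgR⟩, hgd⟩ := hg c ⟨hc0, hlt⟩
    apply key (g c) hg0 hgR.le
    · intro t ht
      rw [← hgd]
      exact (hsm ht.2).le
    · intro t ht
      rw [← hgd]
      exact (hsm ht.1).le
    · by_cases hp : p = 0
      · right
        apply hsm.injective
        rw [hgd, hderiv0, hcdef, hp, norm_zero]
      · left; exact hp
  · intro hge
    have hc' : 0 < c := lt_of_lt_of_le (by rw [← hderiv0]; exact hsm hR) hge
    apply key R hR.le le_rfl
    · intro t ht
      exact (hsm ht.2).le.trans hge
    · intro t ht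
      exact absurd (ht.1.trans ht.2) (lt_irrefl _)
    · left
      exact norm_pos_iff.mp (by rw [← hcdef]; exact hc')
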